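/- Let α > 1 and C₀ > 0. There exists K₀ = K₀(α, C₀) such that the following holds for all K ≥ K₀ and 0 < δ ≤ 1/K. Let m ∈ [1/2, 2], λ₀ ∈ (0,1), set ξ^τ = (0, m) ∈ ℝ², and define for η ∈ Ω = [−1/2,1/2]²: Φ(η) = (α/2) m^{α−2} ( η₁² + (α−1) η₂² ) + δ Θ(η) |η|³, where Θ(η) = (α(α−2)/6) |ξ^τ + δλ₀η|^{α−3} ( 3⟨u, v⟩ + (α−4)⟨u, v⟩³ ) with u = (ξ^τ + δλ₀η)/|ξ^τ + δλ₀η|, v = η/|η| (and Θ(η)|η|³ := 0 at η = 0). Let Σ(η) = (η₁, η₂, Φ(η)) and X(η) = ∂_{η₁}Σ(η) × ∂_{η₂}Σ(η) (cross product in ℝ³). If η^{(1)}, η^{(2)}, η^{(3)} ∈ Ω are such that the determinant of the 3×3 matrix with rows (1,1,1), (η^{(1)}₁, η^{(2)}₁, η^{(3)}₁), (η^{(1)}₂, η^{(2)}₂, η^{(3)}₂) has absolute value ≥ C₀, then |det( X(η^{(1)}), X(η^{(2)}), X(η^{(3)}) )| ≥ (1/2) α² (α−1) m^{2(α−2)}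 C₀. -/

import Mathlib

set_option maxHeartbeats 2000000

noncomputable section

open MeasureTheory Real
open scoped ENNReal Classical

abbrev E2 : Type := EuclideanSpace ℝ (Fin 2)

def vec2 (a b : ℝ) : E2 := (EuclideanSpace.equiv (Fin 2) ℝ).symm ![a, b]

/-- The unit square `Ω = [−1/2,1/2]²`. -/
def Om : Set E2 := {η : E2 | |η 0| ≤ 1 / 2 ∧ |η 1| ≤ 1 / 2}

/-- The inner product `⟨u, v⟩` of the unit vectors `u, v` in the directions of
`ξ^τ + δl₀η` and `η`, where `ξ^τ = (0, m)`. -/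
def ipUV (m δ l₀ : ℝ) (η : E2) : ℝ :=
  (inner ℝ (vec2 0 m + (δ * l₀) • η) η : ℝ) / (‖vec2 0 m + (δ * l₀) • η‖ * ‖η‖)

/-- The third-order Taylor coefficient `Θ(η)`. -/
def Theta (α m δ l₀ : ℝ) (η : E2) : ℝ :=
  α * (α - 2) / 6 * ‖vec2 0 m + (δ * l₀) • η‖ ^ (α - 3) *
    (3 * ipUV m δ l₀ η + (α - 4) * ipUV m δ l₀ η ^ 3)

/-- The rescaled phase `Φ(η) = (α/2) m^{α−2}(η₁² + (α−1)η₂²) + δ Θ(η)|η|³`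
(with `Θ(η)|η|³ := 0` at `η = 0`). -/
def Phi (α m δ l₀ : ℝ) (η : E2) : ℝ :=
  α / 2 * m ^ (α - 2) * (η 0 ^ 2 + (α - 1) * η 1 ^ 2) +
    δ * (if η = 0 then 0 else Theta α m δ l₀ η * ‖η‖ ^ 3)

/-- The graph parametrisation `Σ(η) = (η₁, η₂, Φ(η))`. -/
def Sig (α m δ l₀ : ℝ) (η : E2) : Fin 3 → ℝ := ![η 0, η 1, Phi α m δ l₀ η]

/-- `X(η) = ∂_{η₁}Σ(η) × ∂_{η₂}Σ(η)`. -/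
def Xvec (α m δ l₀ : ℝ) (η : E2) : Fin 3 → ℝ :=
  crossProduct (fderiv ℝ (Sig α m δ l₀) η (EuclideanSpace.single 0 1))
    (fderiv ℝ (Sig α m δ l₀) η (EuclideanSpace.single 1 1))

/-! ### Auxiliary definitions -/

def wv (m s : ℝ) (η : E2) : E2 := vec2 0 m + s • η
def Qf (m s : ℝ) (η : E2) : ℝ := inner ℝ (wv m s η) (wv m s η)
def Pf (m s : ℝ) (η : E2) : ℝ := inner ℝ (wv m s η) η
def Nf (η : E2) : ℝ := inner ℝ η η

/-- Smooth formula for the cubic remainder. -/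
def Gf (α m s : ℝ) (η : E2) : ℝ :=
  α * (α-2) / 2 * (Qf m s η ^ ((α-4)/2) * (Pf m s η * Nf η)) +
  α * (α-2) * (α-4) / 6 * (Qf m s η ^ ((α-6)/2) * (Pf m s η * (Pf m s η * Pf m s η)))

def GA (α m s : ℝ) (η : E2) : ℝ :=
  α * (α-2) / 2 * ((α-4)/2 * Qf m s η ^ ((α-4)/2 - 1) * (2*s) * (Pf m s η * Nf η)
    + Qf m s η ^ ((α-4)/2) * Nf η)
  + α * (α-2) * (α-4) / 6 * ((α-6)/2 * Qf m s η ^ ((α-6)/2 - 1) * (2*s) * Pf m s η ^ 3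
    + Qf m s η ^ ((α-6)/2) * (3 * Pf m s η ^ 2))

def GB (α m s : ℝ) (η : E2) : ℝ :=
  α * (α-2) / 2 * (Qf m s η ^ ((α-4)/2) * (s * Nf η + Pf m s η * 2))
  + α * (α-2) * (α-4) / 6 * (Qf m s η ^ ((α-6)/2) * (3 * Pf m s η ^ 2) * s)

/-- The derivative of `Gf`. -/
def Gd (α m s : ℝ) (η : E2) : E2 →L[ℝ] ℝ :=
  GA α m s η • (innerSL ℝ (wv m s η) : E2 →L[ℝ] ℝ) + GB α m s η • (innerSL ℝ η : E2 →L[ℝ] ℝ)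

/-- A uniform bound for `Gd`. -/
def Mb (α : ℝ) : ℝ := 1000 * (α+8)^4 * (16:ℝ)^(α+8)

/-! ### Basic lemmas -/

lemma norm_vec2 (m : ℝ) (hm : 0 ≤ m) : ‖vec2 0 m‖ = m := by
  rw [EuclideanSpace.norm_eq]
  simp [vec2, Fin.sum_univ_two]
  rw [Real.sqrt_sq hm]

lemma Om_norm_le {η : E2} (hη : η ∈ Om) : ‖η‖ ≤ 1 := by
  obtain ⟨h0, h1⟩ := hη
  rw [EuclideanSpace.norm_eq]
  calc Real.sqrt (∑ i, ‖η i‖^2) ≤ Real.sqrt 1 := by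
        apply Real.sqrt_le_sqrt
        simp [Fin.sum_univ_two, Real.norm_eq_abs, sq_abs]
        nlinarith [sq_abs (η 0), sq_abs (η 1),
          mul_self_le_mul_self (abs_nonneg (η 0)) h0,
          mul_self_le_mul_self (abs_nonneg (η 1)) h1]
    _ = 1 := Real.sqrt_one

lemma abs_mul_le {a b A B : ℝ} (ha : |a| ≤ A) (hb : |b| ≤ B) : |a*b| ≤ A*B := by
  rw [abs_mul]; exact mul_le_mul ha hb (abs_nonneg b) ((abs_nonneg a).trans ha)

lemma rpow_window {x : ℝ} (hx1 : 1/16 ≤ x) (hx2 : x ≤ 16) {β B : ℝ} (hβ : |β| ≤ B) :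
    x ^ β ≤ (16:ℝ) ^ B := by
  have hx0 : (0:ℝ) < x := lt_of_lt_of_le (by norm_num) hx1
  rcases le_or_gt 0 β with h|h
  · calc x^β ≤ (16:ℝ)^β := Real.rpow_le_rpow hx0.le hx2 h
      _ ≤ (16:ℝ)^B := Real.rpow_le_rpow_of_exponent_le (by norm_num) ((le_abs_self β).trans hβ)
  · calc x^β ≤ ((1:ℝ)/16)^β := Real.rpow_le_rpow_of_nonpos (by norm_num) hx1 h.le
      _ = (16:ℝ)^(-β) := by
          rw [one_div, Real.inv_rpow (by norm_num), ← Real.rpow_neg (by norm_num)]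
      _ ≤ (16:ℝ)^B := Real.rpow_le_rpow_of_exponent_le (by norm_num) ((neg_le_abs β).trans hβ)

lemma wv_norm_bounds {m s : ℝ} (hm1 : 1/2 ≤ m) (hm2 : m ≤ 2) (hs0 : 0 < s) (hs : s ≤ 1/8)
    {η : E2} (hη : ‖η‖ ≤ 1) : 3/8 ≤ ‖wv m s η‖ ∧ ‖wv m s η‖ ≤ 17/8 := by
  have hm0 : (0:ℝ) ≤ m := by linarith
  have hsη : ‖s • η‖ ≤ 1/8 := by
    rw [norm_smul, Real.norm_eq_abs, abs_of_pos hs0]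
    nlinarith [norm_nonneg η]
  constructor
  · have h := norm_add_le (wv m s η) (-(s • η))
    have h2 : wv m s η + -(s • η) = vec2 0 m := by unfold wv; abel
    rw [h2, norm_vec2 m hm0, norm_neg] at h
    linarith
  · have h := norm_add_le (vec2 0 m) (s • η)
    rw [norm_vec2 m hm0] at h
    unfold wv
    linarith

lemma wv_ne_zero {m s : ℝ} (hm1 : 1/2 ≤ m) (hm2 : m ≤ 2) (hs0 : 0 < s) (hs : s ≤ 1/8)
    {η : E2} (hη : ‖η‖ ≤ 1) : wv m s η ≠ 0 := by
  intro h
  have h3 := (wv_norm_bounds hm1 hm2 hs0 hs hη).1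
  rw [h, norm_zero] at h3
  linarith

/-! ### The identification `Phi = quadratic + δ · Gf` -/

lemma phi_eq (α m δ l₀ : ℝ) (η : E2) (hw : wv m (δ * l₀) η ≠ 0) :
    Phi α m δ l₀ η =
      α / 2 * m ^ (α - 2) * (η 0 ^ 2 + (α - 1) * η 1 ^ 2) + δ * Gf α m (δ * l₀) η := by
  unfold Phi
  congr 1
  by_cases hη : η = 0
  · subst hη
    simp [Gf, Pf, Nf, inner_zero_right]
  · rw [if_neg hη]
    have hWpos : (0:ℝ) < ‖wv m (δ*l₀) η‖ := norm_pos_iff.mpr hw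
    have hRpos : (0:ℝ) < ‖η‖ := norm_pos_iff.mpr hη
    set W := ‖wv m (δ*l₀) η‖ with hW
    set R := ‖η‖ with hR
    have hQ : Qf m (δ*l₀) η = W ^ 2 := real_inner_self_eq_norm_sq _
    have hN : Nf η = R ^ 2 := real_inner_self_eq_norm_sq _
    have hip : ipUV m δ l₀ η = Pf m (δ*l₀) η / (W * R) := rfl
    unfold Theta Gf
    rw [hip, hQ, hN]
    set P := Pf m (δ*l₀) η
    set u := W ^ (α-6) with hu
    have e1 : (W ^ 2 : ℝ) ^ ((α-4)/2) = u * W ^ (2:ℕ) := by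
      rw [hu, ← Real.rpow_natCast W 2, ← Real.rpow_mul hWpos.le, ← Real.rpow_add hWpos]
      congr 1; push_cast; ring
    have e2 : (W ^ 2 : ℝ) ^ ((α-6)/2) = u := by
      rw [hu, ← Real.rpow_natCast W 2, ← Real.rpow_mul hWpos.le]
      congr 1; push_cast; ring
    have e3 : W ^ (α-3) = u * W ^ (3:ℕ) := by
      rw [hu, ← Real.rpow_natCast W 3, ← Real.rpow_add hWpos]
      congr 1; push_cast; ring
    rw [e1, e2]
    have hW3 : ‖vec2 0 m + (δ * l₀) • η‖ = W := rfl
    rw [hW3, e3]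
    field_simp
    ring

/-! ### Differentiability of `Gf` -/

lemma hasFDeriv_Gf (α m s : ℝ) (η : E2) (hw : wv m s η ≠ 0) :
    HasFDerivAt (Gf α m s) (Gd α m s η) η := by
  have hQpos : (0:ℝ) < Qf m s η := by
    rw [show Qf m s η = ‖wv m s η‖^2 from real_inner_self_eq_norm_sq _]
    exact pow_pos (norm_pos_iff.mpr hw) 2
  have hw' : HasFDerivAt (wv m s) (s • (ContinuousLinearMap.id ℝ E2)) η := by
    unfold wv
    simpa using ((hasFDerivAt_id η).const_smul s).const_add (vec2 0 m)
  have hQ : HasFDerivAt (Qf m s) _ η := hw'.inner ℝ hw'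
  have hP : HasFDerivAt (Pf m s) _ η := hw'.inner ℝ (hasFDerivAt_id η)
  have hN : HasFDerivAt Nf _ η := (hasFDerivAt_id η).inner ℝ (hasFDerivAt_id η)
  have hQ1 := hQ.rpow_const (p := (α-4)/2) (Or.inl hQpos.ne')
  have hQ2 := hQ.rpow_const (p := (α-6)/2) (Or.inl hQpos.ne')
  have hG := ((hQ1.mul (hP.mul hN)).const_mul (α*(α-2)/2)).add
    ((hQ2.mul (hP.mul (hP.mul hP))).const_mul (α*(α-2)*(α-4)/6))
  refine hG.congr_fderiv ?_
  apply ContinuousLinearMap.ext; intro h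
  simp only [Gd, ContinuousLinearMap.add_apply, ContinuousLinearMap.coe_smul', Pi.smul_apply,
    innerSL_apply_apply, smul_eq_mul, ContinuousLinearMap.comp_apply, ContinuousLinearMap.prod_apply,
    fderivInnerCLM_apply, ContinuousLinearMap.coe_id', id_eq, ContinuousLinearMap.smul_apply,
    ContinuousLinearMap.id_apply, real_inner_smul_left, real_inner_smul_right, Pi.mul_apply]
  rw [real_inner_comm h (wv m s η), real_inner_comm h η]
  unfold GA GB Qf Pf Nf
  ring

/-! ### Uniform bound for `Gd` -/

lemma Gd_bound {α m s : ℝ} (hα : 1 < α) (hm1 : 1/2 ≤ m) (hm2 : m ≤ 2) (hs0 : 0 < s)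
    (hs : s ≤ 1/8) {η h : E2} (hη : ‖η‖ ≤ 1) (hh : ‖h‖ ≤ 1) :
    |Gd α m s η h| ≤ Mb α := by
  obtain ⟨hWlo, hWhi⟩ := wv_norm_bounds hm1 hm2 hs0 hs hη
  have hW0 : (0:ℝ) ≤ ‖wv m s η‖ := norm_nonneg _
  have hQ1 : 1/16 ≤ Qf m s η := by
    rw [show Qf m s η = ‖wv m s η‖^2 from real_inner_self_eq_norm_sq _]; nlinarith
  have hQ2 : Qf m s η ≤ 16 := by
    rw [show Qf m s η = ‖wv m s η‖^2 from real_inner_self_eq_norm_sq _]; nlinarith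
  set u : ℝ := α + 8 with hu
  have hu9 : 9 ≤ u := by simp [hu]; linarith
  set T : ℝ := (16:ℝ)^(α+8) with hT
  have hT1 : 1 ≤ T := Real.one_le_rpow (by norm_num) (by linarith)
  have hb1 : |(α-4)/2| ≤ u := by rw [abs_le]; constructor <;> simp [hu] <;> linarith
  have hb2 : |(α-6)/2| ≤ u := by rw [abs_le]; constructor <;> simp [hu] <;> linarith
  have hc1 : |α*(α-2)/2| ≤ u^2 := by
    rw [abs_le]; constructor <;> simp [hu] <;> nlinarith
  have hc2 : |α*(α-2)*(α-4)/6| ≤ u^3 := by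
    rw [abs_le]; constructor <;> simp [hu] <;> nlinarith
  have ht1 : |Qf m s η ^ ((α-4)/2)| ≤ T := by
    rw [abs_of_pos (Real.rpow_pos_of_pos (by linarith) _)]
    exact rpow_window hQ1 hQ2 (by rw [abs_le]; constructor <;> linarith [abs_le.mp hb1])
  have ht2 : |Qf m s η ^ ((α-4)/2 - 1)| ≤ T := by
    rw [abs_of_pos (Real.rpow_pos_of_pos (by linarith) _)]
    refine rpow_window hQ1 hQ2 ?_
    rw [abs_le]; constructor <;> [linarith [(abs_le.mp hb1).1]; linarith [(abs_le.mp hb1).2, hu9]]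
  have ht3 : |Qf m s η ^ ((α-6)/2)| ≤ T := by
    rw [abs_of_pos (Real.rpow_pos_of_pos (by linarith) _)]
    exact rpow_window hQ1 hQ2 (by rw [abs_le]; constructor <;> linarith [abs_le.mp hb2])
  have ht4 : |Qf m s η ^ ((α-6)/2 - 1)| ≤ T := by
    rw [abs_of_pos (Real.rpow_pos_of_pos (by linarith) _)]
    refine rpow_window hQ1 hQ2 ?_
    rw [abs_le]; constructor <;> [linarith [(abs_le.mp hb2).1]; linarith [(abs_le.mp hb2).2, hu9]]
  have hP : |Pf m s η| ≤ 4 := by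
    refine (abs_real_inner_le_norm _ _).trans ?_
    nlinarith [norm_nonneg η]
  have hN : |Nf η| ≤ 1 := by
    rw [show Nf η = ‖η‖^2 from real_inner_self_eq_norm_sq _, abs_of_nonneg (by positivity)]
    nlinarith [norm_nonneg η]
  have hWh : |(inner ℝ (wv m s η) h : ℝ)| ≤ 4 := by
    refine (abs_real_inner_le_norm _ _).trans ?_
    nlinarith [norm_nonneg (wv m s η), norm_nonneg h]
  have hEh : |(inner ℝ η h : ℝ)| ≤ 1 := by
    refine (abs_real_inner_le_norm _ _).trans ?_
    nlinarith [norm_nonneg η, norm_nonneg h]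
  have h2s : |2*s| ≤ 1 := by rw [abs_le]; constructor <;> linarith
  have hss : |s| ≤ 1 := by rw [abs_le]; constructor <;> linarith
  have hval : Gd α m s η h
      = GA α m s η * (inner ℝ (wv m s η) h : ℝ) + GB α m s η * (inner ℝ η h : ℝ) := by
    simp [Gd]
  have hT0 : (0:ℝ) ≤ T := by linarith
  have hu0 : (0:ℝ) ≤ u := by linarith
  have hX1 : |(α-4)/2 * Qf m s η ^ ((α-4)/2 - 1) * (2*s) * (Pf m s η * Nf η)
      + Qf m s η ^ ((α-4)/2) * Nf η| ≤ 5*u*T := by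
    refine (abs_add_le _ _).trans ?_
    have g1 := abs_mul_le (abs_mul_le (abs_mul_le hb1 ht2) h2s) (abs_mul_le hP hN)
    have g2 := abs_mul_le ht1 hN
    nlinarith
  have hX2 : |(α-6)/2 * Qf m s η ^ ((α-6)/2 - 1) * (2*s) * Pf m s η ^ 3
      + Qf m s η ^ ((α-6)/2) * (3 * Pf m s η ^ 2)| ≤ 112*u*T := by
    refine (abs_add_le _ _).trans ?_
    have hP3 : |Pf m s η ^ 3| ≤ 64 := by
      rw [pow_succ, pow_two]
      exact (abs_mul_le (abs_mul_le hP hP) hP).trans (by norm_num)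
    have hP2 : |3 * Pf m s η ^ 2| ≤ 48 := by
      rw [pow_two]
      exact (abs_mul_le (le_refl |(3:ℝ)|) (abs_mul_le hP hP)).trans (by norm_num)
    have g1 := abs_mul_le (abs_mul_le (abs_mul_le hb2 ht4) h2s) hP3
    have g2 := abs_mul_le ht3 hP2
    nlinarith
  have hGA : |GA α m s η| ≤ u^2 * (5*u*T) + u^3 * (112*u*T) := by
    unfold GA
    refine (abs_add_le _ _).trans ?_
    have g1 := abs_mul_le hc1 hX1
    have g2 := abs_mul_le hc2 hX2
    linarith
  have hY1 : |Qf m s η ^ ((α-4)/2) * (s * Nf η + Pf m s η * 2)| ≤ 9*T := by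
    have h9 : |s * Nf η + Pf m s η * 2| ≤ 9 := by
      refine (abs_add_le _ _).trans ?_
      have g1 := abs_mul_le hss hN
      have g2 := abs_mul_le hP (le_refl |(2:ℝ)|)
      simp only [abs_two] at g2
      linarith
    have := abs_mul_le ht1 h9
    linarith
  have hY2 : |Qf m s η ^ ((α-6)/2) * (3 * Pf m s η ^ 2) * s| ≤ 48*T := by
    have hP2 : |3 * Pf m s η ^ 2| ≤ 48 := by
      rw [pow_two]
      exact (abs_mul_le (le_refl |(3:ℝ)|) (abs_mul_le hP hP)).trans (by norm_num)
    have := abs_mul_le (abs_mul_le ht3 hP2) hss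
    linarith
  have hGB : |GB α m s η| ≤ u^2 * (9*T) + u^3 * (48*T) := by
    unfold GB
    refine (abs_add_le _ _).trans ?_
    have g1 := abs_mul_le hc1 hY1
    have g2 := abs_mul_le hc2 hY2
    linarith
  rw [hval]
  refine (abs_add_le _ _).trans ?_
  have g1 := abs_mul_le hGA hWh
  have g2 := abs_mul_le hGB hEh
  have hMbu : Mb α = 1000 * u^4 * T := by rw [Mb, hu, hT]
  rw [hMbu]
  nlinarith [pow_nonneg hu0 2, pow_nonneg hu0 3, pow_nonneg hu0 4,
    mul_le_mul_of_nonneg_left hu9 (mul_nonneg (pow_nonneg hu0 3) hT0)]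

/-! ### Derivative of `Phi` and the formula for `Xvec` -/

lemma hasFDeriv_Phi {α m δ l₀ : ℝ} (hm1 : 1/2 ≤ m) (hm2 : m ≤ 2) (hδ0 : 0 < δ) (hl0 : 0 < l₀)
    (hl1 : l₀ < 1) (hδ : δ ≤ 1/8) {η : E2} (hη : ‖η‖ ≤ 1) :
    HasFDerivAt (Phi α m δ l₀)
      ((α * m^(α-2) * η 0) • (EuclideanSpace.proj (0 : Fin 2) : E2 →L[ℝ] ℝ)
        + (α * m^(α-2) * (α-1) * η 1) • (EuclideanSpace.proj (1 : Fin 2) : E2 →L[ℝ] ℝ)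
        + δ • Gd α m (δ*l₀) η) η := by
  have hs0 : 0 < δ * l₀ := mul_pos hδ0 hl0
  have hs8 : δ * l₀ ≤ 1/8 := by nlinarith
  have hwη : wv m (δ*l₀) η ≠ 0 := wv_ne_zero hm1 hm2 hs0 hs8 hη
  have hU : IsOpen {η' : E2 | wv m (δ*l₀) η' ≠ 0} := by
    have hc : Continuous (wv m (δ*l₀)) := by
      unfold wv; exact continuous_const.add (continuous_const_smul (δ*l₀))
    exact isOpen_compl_singleton.preimage hc
  have hx0 : HasFDerivAt (fun η' : E2 => η' 0)
      (EuclideanSpace.proj (0 : Fin 2) : E2 →L[ℝ] ℝ) η :=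
    (EuclideanSpace.proj (0 : Fin 2) : E2 →L[ℝ] ℝ).hasFDerivAt
  have hx1 : HasFDerivAt (fun η' : E2 => η' 1)
      (EuclideanSpace.proj (1 : Fin 2) : E2 →L[ℝ] ℝ) η :=
    (EuclideanSpace.proj (1 : Fin 2) : E2 →L[ℝ] ℝ).hasFDerivAt
  have hF : HasFDerivAt (fun η' : E2 =>
      α / 2 * m ^ (α - 2) * (η' 0 * η' 0 + (α - 1) * (η' 1 * η' 1)) + δ * Gf α m (δ*l₀) η') _ η :=
    (((hx0.mul hx0).add ((hx1.mul hx1).const_mul (α-1))).const_mul (α/2*m^(α-2))).add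
      ((hasFDeriv_Gf α m (δ*l₀) η hwη).const_mul δ)
  have heq : Phi α m δ l₀ =ᶠ[nhds η] (fun η' : E2 =>
      α / 2 * m ^ (α - 2) * (η' 0 * η' 0 + (α - 1) * (η' 1 * η' 1)) + δ * Gf α m (δ*l₀) η') := by
    filter_upwards [hU.mem_nhds hwη] with η' hη'
    rw [phi_eq α m δ l₀ η' hη']
    ring
  have hPhi := hF.congr_of_eventuallyEq heq
  refine hPhi.congr_fderiv ?_
  apply ContinuousLinearMap.ext; intro h
  simp only [ContinuousLinearMap.add_apply, ContinuousLinearMap.smul_apply,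
    ContinuousLinearMap.coe_smul', Pi.smul_apply, smul_eq_mul]
  ring

lemma Xvec_eq {α m δ l₀ : ℝ} (hm1 : 1/2 ≤ m) (hm2 : m ≤ 2) (hδ0 : 0 < δ) (hl0 : 0 < l₀)
    (hl1 : l₀ < 1) (hδ : δ ≤ 1/8) {η : E2} (hη : ‖η‖ ≤ 1) :
    Xvec α m δ l₀ η =
      ![-(α * m^(α-2) * η 0 + δ * Gd α m (δ*l₀) η (EuclideanSpace.single 0 1)),
        -(α * m^(α-2) * (α-1) * η 1 + δ * Gd α m (δ*l₀) η (EuclideanSpace.single 1 1)), 1] := by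
  set L := (α * m^(α-2) * η 0) • (EuclideanSpace.proj (0 : Fin 2) : E2 →L[ℝ] ℝ)
        + (α * m^(α-2) * (α-1) * η 1) • (EuclideanSpace.proj (1 : Fin 2) : E2 →L[ℝ] ℝ)
        + δ • Gd α m (δ*l₀) η with hL
  have hPhi : HasFDerivAt (Phi α m δ l₀) L η := hasFDeriv_Phi hm1 hm2 hδ0 hl0 hl1 hδ hη
  set D : E2 →L[ℝ] (Fin 3 → ℝ) := ContinuousLinearMap.pi
    ![(EuclideanSpace.proj (0 : Fin 2) : E2 →L[ℝ] ℝ),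
      (EuclideanSpace.proj (1 : Fin 2) : E2 →L[ℝ] ℝ), L] with hD
  have hSig : HasFDerivAt (Sig α m δ l₀) D η := by
    apply hasFDerivAt_pi''
    intro i
    fin_cases i
    · show HasFDerivAt (fun x : E2 => Sig α m δ l₀ x 0) _ η
      have h0 : (fun x : E2 => Sig α m δ l₀ x 0) = fun x : E2 => x 0 := by
        funext x; simp [Sig]
      rw [h0, hD]
      simpa using (EuclideanSpace.proj (0 : Fin 2) : E2 →L[ℝ] ℝ).hasFDerivAt
    · show HasFDerivAt (fun x : E2 => Sig α m δ l₀ x 1) _ η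
      have h0 : (fun x : E2 => Sig α m δ l₀ x 1) = fun x : E2 => x 1 := by
        funext x; simp [Sig]
      rw [h0, hD]
      simpa using (EuclideanSpace.proj (1 : Fin 2) : E2 →L[ℝ] ℝ).hasFDerivAt
    · show HasFDerivAt (fun x : E2 => Sig α m δ l₀ x 2) _ η
      have h0 : (fun x : E2 => Sig α m δ l₀ x 2) = Phi α m δ l₀ := by
        funext x; simp [Sig]
      rw [h0, hD]
      simpa using hPhi
  have hfd : fderiv ℝ (Sig α m δ l₀) η = D := hSig.fderiv
  have hv1 : D (EuclideanSpace.single 0 1)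
      = ![1, 0, α * m^(α-2) * η 0 + δ * Gd α m (δ*l₀) η (EuclideanSpace.single 0 1)] := by
    funext i
    fin_cases i <;>
      simp [hD, hL, ContinuousLinearMap.pi_apply, PiLp.proj_apply,
        EuclideanSpace.single_apply]
  have hv2 : D (EuclideanSpace.single 1 1)
      = ![0, 1, α * m^(α-2) * (α-1) * η 1 + δ * Gd α m (δ*l₀) η (EuclideanSpace.single 1 1)] := by
    funext i
    fin_cases i <;>
      simp [hD, hL, ContinuousLinearMap.pi_apply, PiLp.proj_apply,
        EuclideanSpace.single_apply]
  unfold Xvec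
  rw [hfd, hv1, hv2]
  funext i
  fin_cases i <;> simp [cross_apply]

/-! ### Bounds on `m ^ (α-2)` -/

lemma m_rpow_le {α m : ℝ} (hα : 1 < α) (hm1 : 1/2 ≤ m) (hm2 : m ≤ 2) :
    m ^ (α-2) ≤ (2:ℝ)^α := by
  have hm0 : (0:ℝ) < m := by linarith
  rcases le_or_gt 2 α with h|h
  · calc m^(α-2) ≤ (2:ℝ)^(α-2) := Real.rpow_le_rpow hm0.le hm2 (by linarith)
      _ ≤ (2:ℝ)^α := Real.rpow_le_rpow_of_exponent_le (by norm_num) (by linarith)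
  · calc m^(α-2) ≤ ((1:ℝ)/2)^(α-2) := Real.rpow_le_rpow_of_nonpos (by linarith) hm1 (by linarith)
      _ = (2:ℝ)^(2-α) := by
          rw [one_div, Real.inv_rpow (by norm_num), ← Real.rpow_neg (by norm_num)]
          ring_nf
      _ ≤ (2:ℝ)^α := Real.rpow_le_rpow_of_exponent_le (by norm_num) (by linarith)

lemma m_rpow_ge {α m : ℝ} (hα : 1 < α) (hm1 : 1/2 ≤ m) (hm2 : m ≤ 2) :
    (2:ℝ)^(-α) ≤ m ^ (α-2) := by
  have hm0 : (0:ℝ) < m := by linarith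
  rcases le_or_gt 2 α with h|h
  · calc (2:ℝ)^(-α) ≤ (2:ℝ)^(2-α) := Real.rpow_le_rpow_of_exponent_le (by norm_num) (by linarith)
      _ = ((1:ℝ)/2)^(α-2) := by
          rw [one_div, Real.inv_rpow (by norm_num), ← Real.rpow_neg (by norm_num)]
          ring_nf
      _ ≤ m^(α-2) := Real.rpow_le_rpow (by norm_num) hm1 (by linarith)
  · calc (2:ℝ)^(-α) ≤ (2:ℝ)^(α-2) := Real.rpow_le_rpow_of_exponent_le (by norm_num) (by linarith)
      _ ≤ m^(α-2) := Real.rpow_le_rpow_of_nonpos hm0 hm2 (by linarith)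

lemma abs_mul_le' {a b A B : ℝ} (ha : |a| ≤ A) (hb : |b| ≤ B) : |a*b| ≤ A*B := by
  rw [abs_mul]; exact mul_le_mul ha hb (abs_nonneg b) ((abs_nonneg a).trans ha)

lemma final_arith (a b δ M C₀ PP BB : ℝ)
    (x1 x2 x3 y1 y2 y3 r1 r2 r3 s1 s2 s3 : ℝ)
    (ha0 : 0 < a) (hb0 : 0 < b) (hδ0 : 0 < δ)
    (hp1 : |a*x1 + δ*r1| ≤ PP) (hp2 : |a*x2 + δ*r2| ≤ PP) (hp3 : |a*x3 + δ*r3| ≤ PP)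
    (hq1 : |b*y1| ≤ BB) (hq2 : |b*y2| ≤ BB) (hq3 : |b*y3| ≤ BB)
    (hr1 : |r1| ≤ M) (hr2 : |r2| ≤ M) (hr3 : |r3| ≤ M)
    (hs1 : |s1| ≤ M) (hs2 : |s2| ≤ M) (hs3 : |s3| ≤ M)
    (hD : C₀ ≤ |x2*y3 - x3*y2 - (x1*y3 - x3*y1) + (x1*y2 - x2*y1)|)
    (hsmall : δ * (6*(PP+BB)*M) ≤ a*b*C₀/2) :
    a*b*C₀/2 ≤
      |(-(a*x1 + δ*r1)) * ((-(b*y2 + δ*s2)) * 1 - (-(b*y3 + δ*s3)) * 1)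
       - (-(a*x2 + δ*r2)) * ((-(b*y1 + δ*s1)) * 1 - (-(b*y3 + δ*s3)) * 1)
       + (-(a*x3 + δ*r3)) * ((-(b*y1 + δ*s1)) * 1 - (-(b*y2 + δ*s2)) * 1)| := by
  set Dh : ℝ := x2*y3 - x3*y2 - (x1*y3 - x3*y1) + (x1*y2 - x2*y1) with hDh
  set det : ℝ := (-(a*x1 + δ*r1)) * ((-(b*y2 + δ*s2)) * 1 - (-(b*y3 + δ*s3)) * 1)
       - (-(a*x2 + δ*r2)) * ((-(b*y1 + δ*s1)) * 1 - (-(b*y3 + δ*s3)) * 1)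
       + (-(a*x3 + δ*r3)) * ((-(b*y1 + δ*s1)) * 1 - (-(b*y2 + δ*s2)) * 1) with hdet
  have hterm : ∀ p q r s : ℝ, |p| ≤ PP → |q| ≤ BB → |r| ≤ M → |s| ≤ M →
      |p*(δ*s) + q*(δ*r)| ≤ (PP+BB)*(δ*M) := by
    intro p q r s hp hq hr hs
    refine (abs_add_le _ _).trans ?_
    have hds : |δ*s| ≤ δ*M := abs_mul_le' (by rw [abs_of_pos hδ0]) hs
    have hdr : |δ*r| ≤ δ*M := abs_mul_le' (by rw [abs_of_pos hδ0]) hr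
    have g1 := abs_mul_le' hp hds
    have g2 := abs_mul_le' hq hdr
    nlinarith
  have g12 := hterm _ _ _ _ hp1 hq2 hr1 hs2
  have g13 := hterm _ _ _ _ hp1 hq3 hr1 hs3
  have g21 := hterm _ _ _ _ hp2 hq1 hr2 hs1
  have g23 := hterm _ _ _ _ hp2 hq3 hr2 hs3
  have g31 := hterm _ _ _ _ hp3 hq1 hr3 hs1
  have g32 := hterm _ _ _ _ hp3 hq2 hr3 hs2
  have hkey : det - a*b*Dh =
      ((a*x1 + δ*r1)*(δ*s2) + (b*y2)*(δ*r1))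
      - ((a*x1 + δ*r1)*(δ*s3) + (b*y3)*(δ*r1))
      - ((a*x2 + δ*r2)*(δ*s1) + (b*y1)*(δ*r2))
      + ((a*x2 + δ*r2)*(δ*s3) + (b*y3)*(δ*r2))
      + ((a*x3 + δ*r3)*(δ*s1) + (b*y1)*(δ*r3))
      - ((a*x3 + δ*r3)*(δ*s2) + (b*y2)*(δ*r3)) := by
    rw [hdet, hDh]; ring
  have herr : |det - a*b*Dh| ≤ 6*((PP+BB)*(δ*M)) := by
    rw [hkey, abs_le]
    constructor <;>
      linarith [(abs_le.mp g12).1, (abs_le.mp g12).2, (abs_le.mp g13).1, (abs_le.mp g13).2,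
        (abs_le.mp g21).1, (abs_le.mp g21).2, (abs_le.mp g23).1, (abs_le.mp g23).2,
        (abs_le.mp g31).1, (abs_le.mp g31).2, (abs_le.mp g32).1, (abs_le.mp g32).2]
  have hlow : a*b*C₀ ≤ a*b*|Dh| := mul_le_mul_of_nonneg_left hD (mul_pos ha0 hb0).le
  have habs : a*b*|Dh| - |det - a*b*Dh| ≤ |det| := by
    have h1 := abs_sub_abs_le_abs_sub (a*b*Dh) det
    rw [abs_sub_comm] at h1
    have h2 : |a*b*Dh| = a*b*|Dh| := by
      rw [abs_mul, abs_of_pos (mul_pos ha0 hb0)]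
    linarith
  have hCeeq : δ * (6*(PP+BB)*M) = 6*((PP+BB)*(δ*M)) := by ring
  linarith

/-! ### Main theorem -/

/-- Transversality: non-collinearity of `η^{(1)}, η^{(2)}, η^{(3)}` (quantified by the
determinant lower bound `C₀`) implies a quantitative lower bound on
`|det(X(η^{(1)}), X(η^{(2)}), X(η^{(3)}))|`. -/
theorem transversality_det_lower_bound (α C₀ : ℝ) (hα : 1 < α) (hC₀ : 0 < C₀) :
    ∃ K₀ : ℝ,
      ∀ K : ℝ, K₀ ≤ K → ∀ δ : ℝ, 0 < δ → δ ≤ 1 / K →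
        ∀ m ∈ Set.Icc (1 / 2 : ℝ) 2, ∀ l₀ ∈ Set.Ioo (0 : ℝ) 1,
          ∀ η₁ ∈ Om, ∀ η₂ ∈ Om, ∀ η₃ ∈ Om,
            C₀ ≤ |Matrix.det !![1, 1, 1; η₁ 0, η₂ 0, η₃ 0; η₁ 1, η₂ 1, η₃ 1]| →
            1 / 2 * α ^ 2 * (α - 1) * m ^ (2 * (α - 2)) * C₀ ≤
              |Matrix.det (Matrix.of fun i j =>
                (![Xvec α m δ l₀ η₁, Xvec α m δ l₀ η₂, Xvec α m δ l₀ η₃]) j i)| := by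
  have hα0 : (0:ℝ) < α := by linarith
  have h2α : (0:ℝ) < (2:ℝ)^α := Real.rpow_pos_of_pos (by norm_num) α
  have hMb0 : 0 < Mb α := by
    have h1 := Real.rpow_pos_of_pos (show (0:ℝ) < 16 by norm_num) (α+8)
    have h2 : (0:ℝ) < (α+8)^4 := by positivity
    unfold Mb
    positivity
  set PP : ℝ := α*(2:ℝ)^α + Mb α with hPP
  set BB : ℝ := α^2*(2:ℝ)^α with hBB
  set Ce : ℝ := 6*(PP+BB)*Mb α with hCe
  have hCe0 : 0 < Ce := by
    rw [hCe, hPP, hBB]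
    have h1 : 0 < α*(2:ℝ)^α := mul_pos hα0 h2α
    have h2 : 0 < α^2*(2:ℝ)^α := mul_pos (by positivity) h2α
    nlinarith
  set ab0 : ℝ := α^2*(α-1)*(4:ℝ)^(-α) with hab0def
  have h4α : (0:ℝ) < (4:ℝ)^(-α) := Real.rpow_pos_of_pos (by norm_num) _
  have hab0 : 0 < ab0 := by
    rw [hab0def]
    have h5 : (0:ℝ) < α^2*(α-1) := by
      have h6 := mul_pos (mul_pos hα0 hα0) (show (0:ℝ) < α-1 by linarith)
      nlinarith
    exact mul_pos h5 h4α
  refine ⟨max 8 (2*Ce/(ab0*C₀)), ?_⟩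
  intro K hK δ hδ0 hδK m hm l₀ hl₀ η₁ hη₁ η₂ hη₂ η₃ hη₃ hdet
  obtain ⟨hm1, hm2⟩ := hm
  obtain ⟨hl0, hl1⟩ := hl₀
  have hK8 : (8:ℝ) ≤ K := le_trans (le_max_left _ _) hK
  have hK0 : (0:ℝ) < K := by linarith
  have hδ8 : δ ≤ 1/8 := le_trans hδK (by rw [div_le_div_iff₀ hK0 (by norm_num)]; linarith)
  have hδ1 : δ ≤ 1 := by linarith
  have hδCe : δ * Ce ≤ ab0 * C₀ / 2 := by
    have h1 : 2*Ce/(ab0*C₀) ≤ K := le_trans (le_max_right _ _) hK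
    have h2 : 2*Ce ≤ K*(ab0*C₀) := by
      have := (div_le_iff₀ (mul_pos hab0 hC₀)).mp h1
      linarith
    have h4 : δ * K ≤ 1 := by
      have := mul_le_mul_of_nonneg_right hδK hK0.le
      rw [one_div, inv_mul_cancel₀ hK0.ne'] at this
      linarith
    nlinarith [mul_le_mul_of_nonneg_left h2 hδ0.le,
      mul_le_mul_of_nonneg_right h4 (mul_pos hab0 hC₀).le]
  have hs0 : 0 < δ * l₀ := mul_pos hδ0 hl0
  have hs8 : δ * l₀ ≤ 1/8 := by nlinarith
  have hn1 : ‖η₁‖ ≤ 1 := Om_norm_le hη₁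
  have hn2 : ‖η₂‖ ≤ 1 := Om_norm_le hη₂
  have hn3 : ‖η₃‖ ≤ 1 := Om_norm_le hη₃
  have hX1 := Xvec_eq (α := α) hm1 hm2 hδ0 hl0 hl1 hδ8 hn1
  have hX2 := Xvec_eq (α := α) hm1 hm2 hδ0 hl0 hl1 hδ8 hn2
  have hX3 := Xvec_eq (α := α) hm1 hm2 hδ0 hl0 hl1 hδ8 hn3
  have hsing : ∀ i : Fin 2, ‖(EuclideanSpace.single i (1:ℝ) : E2)‖ ≤ 1 := by
    intro i; rw [EuclideanSpace.norm_single]; norm_num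
  have hr1 : |Gd α m (δ*l₀) η₁ (EuclideanSpace.single 0 1)| ≤ Mb α :=
    Gd_bound hα hm1 hm2 hs0 hs8 hn1 (hsing 0)
  have hr2 : |Gd α m (δ*l₀) η₂ (EuclideanSpace.single 0 1)| ≤ Mb α :=
    Gd_bound hα hm1 hm2 hs0 hs8 hn2 (hsing 0)
  have hr3 : |Gd α m (δ*l₀) η₃ (EuclideanSpace.single 0 1)| ≤ Mb α :=
    Gd_bound hα hm1 hm2 hs0 hs8 hn3 (hsing 0)
  have hs1 : |Gd α m (δ*l₀) η₁ (EuclideanSpace.single 1 1)| ≤ Mb α :=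
    Gd_bound hα hm1 hm2 hs0 hs8 hn1 (hsing 1)
  have hs2 : |Gd α m (δ*l₀) η₂ (EuclideanSpace.single 1 1)| ≤ Mb α :=
    Gd_bound hα hm1 hm2 hs0 hs8 hn2 (hsing 1)
  have hs3 : |Gd α m (δ*l₀) η₃ (EuclideanSpace.single 1 1)| ≤ Mb α :=
    Gd_bound hα hm1 hm2 hs0 hs8 hn3 (hsing 1)
  have hma := m_rpow_le hα hm1 hm2
  have hmb := m_rpow_ge hα hm1 hm2
  have hm0 : (0:ℝ) < m := by linarith
  have hmp : 0 < m^(α-2) := Real.rpow_pos_of_pos hm0 _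
  have ha0 : 0 < α * m^(α-2) := mul_pos hα0 hmp
  have hb0 : 0 < α * m^(α-2) * (α-1) := by nlinarith
  -- bounds needed by `final_arith`
  have hpb : ∀ (η : E2), η ∈ Om → ∀ r : ℝ, |r| ≤ Mb α →
      |α * m^(α-2) * η 0 + δ*r| ≤ PP := by
    intro η hη r hr
    refine (abs_add_le _ _).trans ?_
    have g1 : |α * m^(α-2) * η 0| ≤ (α * m^(α-2)) * (1/2) := abs_mul_le
      (by rw [abs_of_pos ha0]) hη.1
    have g2 : |δ*r| ≤ 1*Mb α := abs_mul_le (by rw [abs_of_pos hδ0]; exact hδ1) hr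
    have g3 : α * m^(α-2) ≤ α*(2:ℝ)^α := mul_le_mul_of_nonneg_left hma hα0.le
    rw [hPP]
    linarith
  have hqb : ∀ (η : E2), η ∈ Om →
      |α * m^(α-2) * (α-1) * η 1| ≤ BB := by
    intro η hη
    have g1 : |α * m^(α-2) * (α-1) * η 1| ≤ (α * m^(α-2) * (α-1)) * (1/2) := abs_mul_le
      (by rw [abs_of_pos hb0]) hη.2
    have g3 : α * m^(α-2) * (α-1) ≤ α^2*(2:ℝ)^α := by
      have g4 : (0:ℝ) ≤ α*(α-1) := by nlinarith
      nlinarith [mul_le_mul_of_nonneg_left hma g4]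
    rw [hBB]
    nlinarith [mul_pos (by positivity : (0:ℝ) < α^2) h2α]
  have hD' : C₀ ≤ |η₂ 0 * η₃ 1 - η₃ 0 * η₂ 1 - (η₁ 0 * η₃ 1 - η₃ 0 * η₁ 1)
      + (η₁ 0 * η₂ 1 - η₂ 0 * η₁ 1)| := by
    have hdet3 : Matrix.det !![1, 1, 1; η₁ 0, η₂ 0, η₃ 0; η₁ 1, η₂ 1, η₃ 1]
        = η₂ 0 * η₃ 1 - η₃ 0 * η₂ 1 - (η₁ 0 * η₃ 1 - η₃ 0 * η₁ 1)
          + (η₁ 0 * η₂ 1 - η₂ 0 * η₁ 1) := by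
      simp [Matrix.det_fin_three]
      ring
    rwa [hdet3] at hdet
  -- a*b relations
  have habeq : α * m^(α-2) * (α * m^(α-2) * (α-1)) = α^2*(α-1)*m^(2*(α-2)) := by
    rw [show 2*(α-2) = (α-2)+(α-2) by ring, Real.rpow_add hm0]
    ring
  have habge : ab0 ≤ α * m^(α-2) * (α * m^(α-2) * (α-1)) := by
    rw [habeq, hab0def]
    have h4eq : (4:ℝ)^(-α) = (2:ℝ)^(-α) * (2:ℝ)^(-α) := by
      rw [show (4:ℝ) = 2*2 by norm_num, Real.mul_rpow (by norm_num) (by norm_num)]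
    have hsq : (4:ℝ)^(-α) ≤ m^(2*(α-2)) := by
      rw [h4eq, show 2*(α-2) = (α-2)+(α-2) by ring, Real.rpow_add hm0]
      have h2n : (0:ℝ) < (2:ℝ)^(-α) := Real.rpow_pos_of_pos (by norm_num) _
      nlinarith
    have h6 : (0:ℝ) ≤ α^2*(α-1) := by nlinarith
    exact mul_le_mul_of_nonneg_left hsq h6
  have hsmall : δ * (6*(PP+BB)*Mb α) ≤
      α * m^(α-2) * (α * m^(α-2) * (α-1)) * C₀ / 2 := by
    have e1 : δ * (6*(PP+BB)*Mb α) = δ * Ce := by rw [hCe]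
    have e2 : ab0 * C₀ ≤ α * m^(α-2) * (α * m^(α-2) * (α-1)) * C₀ :=
      mul_le_mul_of_nonneg_right habge hC₀.le
    rw [e1]
    linarith
  have hFA := final_arith (α * m^(α-2)) (α * m^(α-2) * (α-1)) δ (Mb α) C₀ PP BB
    (η₁ 0) (η₂ 0) (η₃ 0) (η₁ 1) (η₂ 1) (η₃ 1)
    (Gd α m (δ*l₀) η₁ (EuclideanSpace.single 0 1))
    (Gd α m (δ*l₀) η₂ (EuclideanSpace.single 0 1))
    (Gd α m (δ*l₀) η₃ (EuclideanSpace.single 0 1))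
    (Gd α m (δ*l₀) η₁ (EuclideanSpace.single 1 1))
    (Gd α m (δ*l₀) η₂ (EuclideanSpace.single 1 1))
    (Gd α m (δ*l₀) η₃ (EuclideanSpace.single 1 1))
    ha0 hb0 hδ0
    (hpb η₁ hη₁ _ hr1) (hpb η₂ hη₂ _ hr2) (hpb η₃ hη₃ _ hr3)
    (hqb η₁ hη₁) (hqb η₂ hη₂) (hqb η₃ hη₃)
    hr1 hr2 hr3 hs1 hs2 hs3 hD' hsmall
  -- identify the determinant
  have hM : (Matrix.of fun i j =>
      (![Xvec α m δ l₀ η₁, Xvec α m δ l₀ η₂, Xvec α m δ l₀ η₃]) j i) =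
      !![-(α * m^(α-2) * η₁ 0 + δ * Gd α m (δ*l₀) η₁ (EuclideanSpace.single 0 1)),
         -(α * m^(α-2) * η₂ 0 + δ * Gd α m (δ*l₀) η₂ (EuclideanSpace.single 0 1)),
         -(α * m^(α-2) * η₃ 0 + δ * Gd α m (δ*l₀) η₃ (EuclideanSpace.single 0 1));
         -(α * m^(α-2) * (α-1) * η₁ 1 + δ * Gd α m (δ*l₀) η₁ (EuclideanSpace.single 1 1)),
         -(α * m^(α-2) * (α-1) * η₂ 1 + δ * Gd α m (δ*l₀) η₂ (EuclideanSpace.single 1 1)),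
         -(α * m^(α-2) * (α-1) * η₃ 1 + δ * Gd α m (δ*l₀) η₃ (EuclideanSpace.single 1 1));
         1, 1, 1] := by
    ext i j
    fin_cases i <;> fin_cases j <;> simp [hX1, hX2, hX3, Matrix.vecHead, Matrix.vecTail]
  have hdetM : Matrix.det (Matrix.of fun i j =>
      (![Xvec α m δ l₀ η₁, Xvec α m δ l₀ η₂, Xvec α m δ l₀ η₃]) j i) =
      (-(α * m^(α-2) * η₁ 0 + δ * Gd α m (δ*l₀) η₁ (EuclideanSpace.single 0 1))) *
        ((-(α * m^(α-2) * (α-1) * η₂ 1 + δ * Gd α m (δ*l₀) η₂ (EuclideanSpace.single 1 1))) * 1 -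
         (-(α * m^(α-2) * (α-1) * η₃ 1 + δ * Gd α m (δ*l₀) η₃ (EuclideanSpace.single 1 1))) * 1)
      - (-(α * m^(α-2) * η₂ 0 + δ * Gd α m (δ*l₀) η₂ (EuclideanSpace.single 0 1))) *
        ((-(α * m^(α-2) * (α-1) * η₁ 1 + δ * Gd α m (δ*l₀) η₁ (EuclideanSpace.single 1 1))) * 1 -
         (-(α * m^(α-2) * (α-1) * η₃ 1 + δ * Gd α m (δ*l₀) η₃ (EuclideanSpace.single 1 1))) * 1)
      + (-(α * m^(α-2) * η₃ 0 + δ * Gd α m (δ*l₀) η₃ (EuclideanSpace.single 0 1))) *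
        ((-(α * m^(α-2) * (α-1) * η₁ 1 + δ * Gd α m (δ*l₀) η₁ (EuclideanSpace.single 1 1))) * 1 -
         (-(α * m^(α-2) * (α-1) * η₂ 1 + δ * Gd α m (δ*l₀) η₂ (EuclideanSpace.single 1 1))) * 1) := by
    rw [hM]
    simp [Matrix.det_fin_three]
    ring
  rw [hdetM]
  have e3 : 1/2*α^2*(α-1)*m^(2*(α-2))*C₀
      = α * m^(α-2) * (α * m^(α-2) * (α-1)) * C₀ / 2 := by
    rw [habeq]; ring
  rw [show (1:ℝ)/2*α^2*(α-1)*m^(2*(α-2))*C₀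
      = α * m^(α-2) * (α * m^(α-2) * (α-1)) * C₀ / 2 from e3]
  exact hFA
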